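/- The 4×4 real matrix Q₁ = ![![0, -1, -3, 0], ![-1, 2, 9, 0], ![0, -1, -3, -1], ![0, 0, 0, 0]] has characteristic polynomial with complex roots exactly λ₁ = λ₂ = 0 (a double root), λ₃ = -1/2 + (√7/2)i, and λ₄ = -1/2 - (√7/2)i. -/

import Mathlib

open Matrix Polynomial

/-- The matrix `Q₁` of Example 2 has characteristic roots exactly
`0, 0, -1/2 + (√7/2)i, -1/2 - (√7/2)i`: a non-simple real eigenvalue and two
non-real eigenvalues. -/
theorem stmt_1 :
    (Matrix.charpoly
      (!![(0:ℂ), -1, -3, 0;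
          -1, 2, 9, 0;
          0, -1, -3, -1;
          0, 0, 0, 0])).roots =
      ({0, 0,
        -(1/2 : ℂ) + (Real.sqrt 7 / 2 : ℝ) * Complex.I,
        -(1/2 : ℂ) - (Real.sqrt 7 / 2 : ℝ) * Complex.I} : Multiset ℂ) := by
  set r : ℂ := -(1/2 : ℂ) + (Real.sqrt 7 / 2 : ℝ) * Complex.I with hr
  set s : ℂ := -(1/2 : ℂ) - (Real.sqrt 7 / 2 : ℝ) * Complex.I with hs
  have h7 : ((Real.sqrt 7 : ℝ) : ℂ) ^ 2 = 7 := by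
    rw [← Complex.ofReal_pow, Real.sq_sqrt (by norm_num : (0:ℝ) ≤ 7)]
    norm_num
  have hsum : r + s = -1 := by rw [hr, hs]; ring
  have hprod : r * s = 2 := by
    have e : r * s = (1/4 : ℂ) - ((Real.sqrt 7 / 2 : ℝ) : ℂ)^2 * Complex.I^2 := by
      rw [hr, hs]; ring
    rw [e, Complex.I_sq]
    push_cast
    rw [div_pow, h7]
    norm_num
  have hcp :
      (Matrix.charpoly
        (!![(0:ℂ), -1, -3, 0;
            -1, 2, 9, 0;
            0, -1, -3, -1;
            0, 0, 0, 0])) =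
      (({0, 0, r, s} : Multiset ℂ).map fun a => X - C a).prod := by
    have e1 : (Matrix.charpoly
        (!![(0:ℂ), -1, -3, 0;
            -1, 2, 9, 0;
            0, -1, -3, -1;
            0, 0, 0, 0])) = X^4 + X^3 + 2*X^2 := by
      simp [Matrix.charpoly, charmatrix_apply, det_succ_row_zero, Fin.sum_univ_succ,
        Matrix.one_apply, Fin.succ_ne_zero, Matrix.diagonal_apply]
      simp [map_ofNat, show Fin.succAbove (1 : Fin 4) (2 : Fin 3) = 3 from by decide,
        show Fin.succAbove (2 : Fin 4) (2 : Fin 3) = 3 from by decide]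
      ring
    rw [e1]
    have e2 : (({0, 0, r, s} : Multiset ℂ).map fun a => X - C a).prod
        = (X - C 0) * ((X - C 0) * ((X - C r) * (X - C s))) := by
      simp [Multiset.insert_eq_cons]
    rw [e2, map_zero]
    have h3 : (X - C r) * (X - C s) = X^2 - (C r + C s) * X + C r * C s := by ring
    rw [h3, ← C_add, ← C_mul, hsum, hprod]
    simp [map_ofNat, map_neg, _root_.map_one]
    ring
  rw [hcp, roots_multiset_prod_X_sub_C]
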